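/- Let α be a CAT(0) geodesic and t₁ < t₂ < t₃. Any L-chain c separating α(t₂) from the set {α(t₁), α(t₃)} has cardinality at most L' = 1 + ⌊L/2⌋. -/
import Mathlib


open Metric Set

namespace Curtains

/-- A CAT(0) space: a metric space in which midpoints exist and the
Bruhat–Tits CN comparison inequality holds. -/
class CAT0 (X : Type*) [MetricSpace X] : Prop where
  midpoint : ∀ x y : X, ∃ m : X, dist x m = dist x y / 2 ∧ dist y m = dist x y / 2
  cn : ∀ x y z m : X, dist x m = dist x y / 2 → dist y m = dist x y / 2 →
    dist z m ^ 2 ≤ (dist z x ^ 2 + dist z y ^ 2) / 2 - dist x y ^ 2 / 4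

variable {X : Type*} [MetricSpace X]

/-- `γ` is a unit-speed geodesic on the set `I ⊆ ℝ`. -/
def IsGeodesicOn (γ : ℝ → X) (I : Set ℝ) : Prop :=
  ∀ s ∈ I, ∀ t ∈ I, dist (γ s) (γ t) = |s - t|

/-- `γ` parametrises the geodesic segment `[x,y]` by `[0, dist x y]`. -/
def IsGeoSeg (γ : ℝ → X) (x y : X) : Prop :=
  γ 0 = x ∧ γ (dist x y) = y ∧ IsGeodesicOn γ (Icc 0 (dist x y))

/-- The geodesic segment `[x,y]` as a subset of `X`. -/
def seg (γ : ℝ → X) (x y : X) : Set X := γ '' Icc 0 (dist x y)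

/-- A geodesic defined on an interval `I ⊆ ℝ`, together with a choice of
closest-point projection onto it. -/
structure Geodesic (X : Type*) [MetricSpace X] where
  I : Set ℝ
  ordConn : I.OrdConnected
  map : ℝ → X
  isom : IsGeodesicOn map I
  proj : X → ℝ
  proj_mem : ∀ x : X, proj x ∈ I
  proj_min : ∀ x : X, ∀ t ∈ I, dist x (map (proj x)) ≤ dist x (map t)

/-- A curtain: the preimage under the closest-point projection of a length-one
subsegment (the pole) not containing the endpoints of the geodesic. -/
structure Curtain (X : Type*) [MetricSpace X] where
  geo : Geodesic X
  r : ℝ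
  pole_in_interior : Icc (r - 1/2) (r + 1/2) ⊆ interior geo.I

namespace Curtain

variable (h : Curtain X)

/-- The curtain as a subset of `X`. -/
def carrier : Set X := {x | h.geo.proj x ∈ Icc (h.r - 1/2) (h.r + 1/2)}

/-- The negative halfspace `h⁻`. -/
def minus : Set X := {x | h.geo.proj x < h.r - 1/2}

/-- The positive halfspace `h⁺`. -/
def plus : Set X := {x | h.r + 1/2 < h.geo.proj x}

/-- The pole of the curtain. -/
def pole : Set X := h.geo.map '' Icc (h.r - 1/2) (h.r + 1/2)

/-- `h` is dual to the geodesic segment from `x` to `y` parametrised by `γ`. -/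
def DualToSeg (γ : ℝ → X) (x y : X) : Prop :=
  h.geo.I = Icc 0 (dist x y) ∧ ∀ t ∈ Icc (0:ℝ) (dist x y), h.geo.map t = γ t

/-- `h` separates the set `A` from the set `B`. -/
def SeparatesSets (A B : Set X) : Prop :=
  (A ⊆ h.minus ∧ B ⊆ h.plus) ∨ (A ⊆ h.plus ∧ B ⊆ h.minus)

/-- `h` separates the point `x` from the point `y`. -/
def SeparatesPts (x y : X) : Prop := h.SeparatesSets {x} {y}

end Curtain

/-- Two curtains meet if their carriers intersect. -/
def Meets (h k : Curtain X) : Prop := (h.carrier ∩ k.carrier).Nonempty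

/-- A (finite) chain of curtains: pairwise disjoint, and each member separates
its neighbours. -/
def IsChainSeq {n : ℕ} (c : Fin n → Curtain X) : Prop :=
  (∀ i j, i ≠ j → Disjoint (c i).carrier (c j).carrier) ∧
  (∀ i j k : Fin n, (i : ℕ) + 1 = j → (j : ℕ) + 1 = k →
    (c j).SeparatesSets (c i).carrier (c k).carrier)

/-- An infinite chain of curtains indexed by `ℕ`. -/
def IsChainSeqNat (c : ℕ → Curtain X) : Prop :=
  (∀ i j, i ≠ j → Disjoint (c i).carrier (c j).carrier) ∧
  (∀ i, (c (i+1)).SeparatesSets (c i).carrier (c (i+2)).carrier)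

/-- Two disjoint curtains are `L`-separated if every chain of curtains meeting
both has cardinality at most `L`. -/
def LSeparated (L : ℕ∞) (h h' : Curtain X) : Prop :=
  Disjoint h.carrier h'.carrier ∧
  ∀ (n : ℕ) (c : Fin n → Curtain X), IsChainSeq c →
    (∀ i, Meets (c i) h ∧ Meets (c i) h') → (n : ℕ∞) ≤ L

/-- Real-valued variant of `L`-separation. -/
def LSeparatedR (L : ℝ) (h h' : Curtain X) : Prop :=
  Disjoint h.carrier h'.carrier ∧
  ∀ (n : ℕ) (c : Fin n → Curtain X), IsChainSeq c →
    (∀ i, Meets (c i) h ∧ Meets (c i) h') → (n : ℝ) ≤ L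

/-- An `L`-chain: a chain whose members are pairwise `L`-separated. -/
def IsLChain (L : ℕ∞) {n : ℕ} (c : Fin n → Curtain X) : Prop :=
  IsChainSeq c ∧ ∀ i j, i ≠ j → LSeparated L (c i) (c j)

/-- An infinite `L`-chain indexed by `ℕ`. -/
def IsLChainNat (L : ℕ∞) (c : ℕ → Curtain X) : Prop :=
  IsChainSeqNat c ∧ ∀ i j, i ≠ j → LSeparated L (c i) (c j)

/-- A chain separates `x` from `y` if every member does. -/
def SeparatesChain {n : ℕ} (c : Fin n → Curtain X) (x y : X) : Prop :=
  ∀ i, (c i).SeparatesPts x y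

/-- The maximal cardinality of an `L`-chain separating `x` from `y`. -/
noncomputable def chainNum (L : ℕ∞) (x y : X) : ℕ :=
  sSup {m : ℕ | ∃ c : Fin m → Curtain X, IsLChain L c ∧ SeparatesChain c x y}

open Classical in
/-- The curtain metric `d_L`. -/
noncomputable def dL (L : ℕ∞) (x y : X) : ℝ :=
  if x = y then 0 else 1 + (chainNum L x y : ℝ)

/-- A geodesic is `D`-contracting if every ball disjoint from it projects to a
set of diameter at most `D`. -/
def Geodesic.Contracting (g : Geodesic X) (D : ℝ) : Prop :=
  ∀ (x : X) (ρ : ℝ), Disjoint (closedBall x ρ) (g.map '' g.I) →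
    Metric.diam (g.map '' (g.proj '' closedBall x ρ)) ≤ D

section Aux

variable {X : Type*} [MetricSpace X] [CAT0 X]

namespace Geodesic

variable (g : Geodesic X)

lemma dist_map {u v : ℝ} (hu : u ∈ g.I) (hv : v ∈ g.I) :
    dist (g.map u) (g.map v) = |u - v| := g.isom u hu v hv

lemma mem_between {u v w : ℝ} (hu : u ∈ g.I) (hv : v ∈ g.I)
    (h1 : min u v ≤ w) (h2 : w ≤ max u v) : w ∈ g.I := by
  rcases le_total u v with h | h
  · exact g.ordConn.out hu hv ⟨by rwa [min_eq_left h] at h1, by rwa [max_eq_right h] at h2⟩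
  · exact g.ordConn.out hv hu ⟨by rwa [min_eq_right h] at h1, by rwa [max_eq_left h] at h2⟩

lemma mid_mem {u v : ℝ} (hu : u ∈ g.I) (hv : v ∈ g.I) : (u + v) / 2 ∈ g.I := by
  refine g.mem_between hu hv ?_ ?_
  · rcases le_total u v with h | h
    · rw [min_eq_left h]; linarith
    · rw [min_eq_right h]; linarith
  · rcases le_total u v with h | h
    · rw [max_eq_right h]; linarith
    · rw [max_eq_left h]; linarith

lemma dist_map_mid₁ {u v : ℝ} (hu : u ∈ g.I) (hv : v ∈ g.I) :
    dist (g.map u) (g.map ((u + v) / 2)) = dist (g.map u) (g.map v) / 2 := by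
  rw [g.dist_map hu (g.mid_mem hu hv), g.dist_map hu hv]
  have h1 : u - (u + v) / 2 = (u - v) / 2 := by ring
  rw [h1, abs_div, abs_two]

lemma dist_map_mid₂ {u v : ℝ} (hu : u ∈ g.I) (hv : v ∈ g.I) :
    dist (g.map v) (g.map ((u + v) / 2)) = dist (g.map u) (g.map v) / 2 := by
  rw [g.dist_map hv (g.mid_mem hu hv), g.dist_map hu hv]
  have h1 : v - (u + v) / 2 = -((u - v) / 2) := by ring
  rw [h1, abs_neg, abs_div, abs_two]

lemma proj_unique (x : X) {t : ℝ} (ht : t ∈ g.I)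
    (hmin : dist x (g.map t) ≤ dist x (g.map (g.proj x))) : t = g.proj x := by
  by_contra hne
  have hpI : g.proj x ∈ g.I := g.proj_mem x
  have heq : dist x (g.map t) = dist x (g.map (g.proj x)) :=
    le_antisymm hmin (g.proj_min x t ht)
  have hcn := CAT0.cn (g.map t) (g.map (g.proj x)) x (g.map ((t + g.proj x) / 2))
    (g.dist_map_mid₁ ht hpI) (g.dist_map_mid₂ ht hpI)
  have hmid := g.proj_min x ((t + g.proj x) / 2) (g.mid_mem ht hpI)
  have hd : dist (g.map t) (g.map (g.proj x)) = |t - g.proj x| := g.dist_map ht hpI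
  have hpos : (0:ℝ) < |t - g.proj x| := abs_pos.mpr (sub_ne_zero.mpr hne)
  nlinarith [dist_nonneg (x := x) (y := g.map ((t + g.proj x) / 2)),
    dist_nonneg (x := x) (y := g.map (g.proj x))]

lemma proj_map_eq {u : ℝ} (hu : u ∈ g.I) : g.proj (g.map u) = u := by
  refine (g.proj_unique (g.map u) hu ?_).symm
  simpa [dist_self] using dist_nonneg (x := g.map u) (y := g.map (g.proj (g.map u)))

lemma orth (x : X) {u : ℝ} (hu : u ∈ g.I) :
    dist x (g.map (g.proj x)) ^ 2 + (u - g.proj x) ^ 2 ≤ dist x (g.map u) ^ 2 := by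
  have hpI : g.proj x ∈ g.I := g.proj_mem x
  have key : ∀ k : ℕ, ∀ v, v ∈ g.I →
      dist x (g.map (g.proj x)) ^ 2 + (1 - (1/2 : ℝ) ^ k) * (v - g.proj x) ^ 2
        ≤ dist x (g.map v) ^ 2 := by
    intro k
    induction k with
    | zero =>
      intro v hv
      have h1 := g.proj_min x v hv
      have h2 := dist_nonneg (x := x) (y := g.map (g.proj x))
      nlinarith
    | succ k ih =>
      intro v hv
      have hmidI : (v + g.proj x) / 2 ∈ g.I := g.mid_mem hv hpI
      have hcn := CAT0.cn (g.map v) (g.map (g.proj x)) x (g.map ((v + g.proj x) / 2))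
        (g.dist_map_mid₁ hv hpI) (g.dist_map_mid₂ hv hpI)
      have hih := ih ((v + g.proj x) / 2) hmidI
      have hvp : dist (g.map v) (g.map (g.proj x)) ^ 2 = (v - g.proj x) ^ 2 := by
        rw [g.dist_map hv hpI]; exact sq_abs _
      have hmp : ((v + g.proj x) / 2 - g.proj x) ^ 2 = (v - g.proj x) ^ 2 / 4 := by ring
      rw [hmp] at hih
      rw [pow_succ ((1:ℝ)/2) k]
      linarith [hih, hcn, hvp]
  have hl : Filter.Tendsto
      (fun k : ℕ => dist x (g.map (g.proj x)) ^ 2 + (1 - (1/2 : ℝ) ^ k) * (u - g.proj x) ^ 2)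
      Filter.atTop (nhds (dist x (g.map (g.proj x)) ^ 2 + (1 - 0) * (u - g.proj x) ^ 2)) := by
    have h0 : Filter.Tendsto (fun k : ℕ => (1/2 : ℝ) ^ k) Filter.atTop (nhds 0) :=
      tendsto_pow_atTop_nhds_zero_of_lt_one (by norm_num) (by norm_num)
    exact (((tendsto_const_nhds.sub h0).mul tendsto_const_nhds).const_add _)
  have hle := le_of_tendsto hl (Filter.Eventually.of_forall (fun k => key k u hu))
  linarith [hle]

/-- The closest-point projection onto a geodesic is nonexpansive. -/
lemma proj_nonexpansive (x y : X) : |g.proj x - g.proj y| ≤ dist x y := by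
  have hpI : g.proj x ∈ g.I := g.proj_mem x
  have hqI : g.proj y ∈ g.I := g.proj_mem y
  obtain ⟨M, hM1, hM2⟩ := CAT0.midpoint x (g.map (g.proj y))
  obtain ⟨N, hN1, hN2⟩ := CAT0.midpoint y (g.map (g.proj x))
  have c1 := CAT0.cn x (g.map (g.proj y)) N M hM1 hM2
  have c2 := CAT0.cn y (g.map (g.proj x)) x N hN1 hN2
  have c3 := CAT0.cn y (g.map (g.proj x)) (g.map (g.proj y)) N hN1 hN2
  have o1 := g.orth x hqI
  have o2 := g.orth y hpI
  have hpq : dist (g.map (g.proj y)) (g.map (g.proj x)) ^ 2 = (g.proj y - g.proj x) ^ 2 := by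
    rw [g.dist_map hqI hpI]; exact sq_abs _
  have h0 : (0:ℝ) ≤ dist N M ^ 2 := sq_nonneg _
  rw [dist_comm N x] at c1
  have key : (g.proj x - g.proj y) ^ 2 ≤ dist x y ^ 2 := by
    have hs : (g.proj x - g.proj y) ^ 2 = (g.proj y - g.proj x) ^ 2 := by ring
    rw [dist_comm (g.map (g.proj y)) y] at c3
    rw [dist_comm N (g.map (g.proj y))] at c1
    linarith [c1, c2, c3, o1, o2, h0, hpq, hs]
  have hsq := Real.sqrt_le_sqrt key
  rwa [Real.sqrt_sq_eq_abs, Real.sqrt_sq dist_nonneg] at hsq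

end Geodesic

end Aux
section Chains

variable {X : Type*} [MetricSpace X]

/-- A discrete chain of points with steps of size at most `ε`, all satisfying `P`. -/
def DChain (P : X → Prop) (ε : ℝ) (z w : X) : Prop :=
  ∃ (m : ℕ) (f : ℕ → X), f 0 = z ∧ f m = w ∧
    (∀ i < m, dist (f i) (f (i+1)) ≤ ε) ∧ ∀ i ≤ m, P (f i)

namespace DChain

lemma mono {P Q : X → Prop} {ε : ℝ} {z w : X} (h : ∀ u, P u → Q u)
    (hd : DChain P ε z w) : DChain Q ε z w := by
  obtain ⟨m, f, h0, hm, hs, hP⟩ := hd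
  exact ⟨m, f, h0, hm, hs, fun i hi => h _ (hP i hi)⟩

lemma weaken {P : X → Prop} {ε ε' : ℝ} {z w : X} (h : ε ≤ ε')
    (hd : DChain P ε z w) : DChain P ε' z w := by
  obtain ⟨m, f, h0, hm, hs, hP⟩ := hd
  exact ⟨m, f, h0, hm, fun i hi => (hs i hi).trans h, hP⟩

lemma trans {P : X → Prop} {ε : ℝ} {z m w : X}
    (h1 : DChain P ε z m) (h2 : DChain P ε m w) : DChain P ε z w := by
  obtain ⟨m₁, f₁, hf10, hf1m, hs1, hP1⟩ := h1
  obtain ⟨m₂, f₂, hf20, hf2m, hs2, hP2⟩ := h2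
  refine ⟨m₁ + m₂, fun i => if i ≤ m₁ then f₁ i else f₂ (i - m₁), by simpa using hf10, ?_, ?_, ?_⟩
  · rcases Nat.eq_zero_or_pos m₂ with h0 | hpos
    · subst h0
      simp only [Nat.add_zero, le_refl, if_pos]
      rw [hf1m, ← hf20]
      simpa using hf2m
    · have h : ¬ (m₁ + m₂ ≤ m₁) := by omega
      simp only [h, if_false]
      rw [Nat.add_sub_cancel_left]
      exact hf2m
  · intro i hi
    rcases lt_trichotomy i m₁ with h | h | h
    · have c1 : i ≤ m₁ := by omega
      have c2 : i + 1 ≤ m₁ := by omega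
      simp only [c1, c2, if_true, if_pos]
      exact hs1 i h
    · subst h
      have hpos : 0 < m₂ := by omega
      have c2 : ¬ (i + 1 ≤ i) := by omega
      simp only [le_refl, if_pos, c2, if_false]
      rw [hf1m, ← hf20]
      have : i + 1 - i = 1 := by omega
      rw [this]
      exact hs2 0 hpos
    · have c1 : ¬ (i ≤ m₁) := by omega
      have c2 : ¬ (i + 1 ≤ m₁) := by omega
      simp only [c1, c2, if_false]
      have : i + 1 - m₁ = (i - m₁) + 1 := by omega
      rw [this]
      exact hs2 (i - m₁) (by omega)
  · intro i hi
    by_cases h : i ≤ m₁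
    · simp only [h, if_true]; exact hP1 i h
    · simp only [h, if_false]; exact hP2 (i - m₁) (by omega)

lemma symm {P : X → Prop} {ε : ℝ} {z w : X} (h : DChain P ε z w) : DChain P ε w z := by
  obtain ⟨m, f, h0, hm, hs, hP⟩ := h
  refine ⟨m, fun i => f (m - i), by simpa using hm, by simpa using h0, ?_, fun i hi => hP _ (by omega)⟩
  intro i hi
  show dist (f (m - i)) (f (m - (i+1))) ≤ ε
  have h1 : m - i = (m - (i+1)) + 1 := by omega
  rw [dist_comm, h1]
  exact hs (m - (i+1)) (by omega)

lemma ivt {P : X → Prop} {ε : ℝ} {z w : X} (F : X → ℝ)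
    (hF : ∀ u v : X, |F u - F v| ≤ dist u v) {A B : ℝ} (hε : 0 ≤ ε) (hAB : A + ε ≤ B)
    (hd : DChain P ε z w) (hz : F z < A) (hw : B < F w) :
    ∃ u, P u ∧ F u ∈ Set.Icc A B := by
  obtain ⟨m, f, h0, hm, hs, hP⟩ := hd
  by_contra hcon
  push_neg at hcon
  have key : ∀ i, i ≤ m → F (f i) < A := by
    intro i
    induction i with
    | zero => intro _; rw [h0]; exact hz
    | succ i ih =>
      intro hi
      have h1 := ih (by omega)
      have h2 := hs i (by omega)
      have h3 := hF (f i) (f (i+1))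
      have h4 := hcon (f (i+1)) (hP (i+1) hi)
      rcases lt_or_ge (F (f (i+1))) A with h5 | h5
      · exact h5
      · exfalso
        rcases le_or_gt (F (f (i+1))) B with h6 | h6
        · exact h4 ⟨h5, h6⟩
        · rw [abs_le] at h3; rcases h3 with ⟨h3a, h3b⟩; linarith
  have := key m le_rfl
  rw [hm] at this
  linarith

end DChain

end Chains

section GeoChains

variable {X : Type*} [MetricSpace X] [CAT0 X]

lemma dchain_btw : ∀ (k : ℕ) (z w : X),
    DChain (fun u => dist z u + dist u w = dist z w) (dist z w / 2^k) z w := by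
  intro k
  induction k with
  | zero =>
    intro z w
    refine ⟨1, fun i => if i = 0 then z else w, by simp, by simp, ?_, ?_⟩
    · intro i hi
      have : i = 0 := by omega
      subst this
      simp
    · intro i hi
      rcases Nat.le_one_iff_eq_zero_or_eq_one.mp hi with h | h <;> subst h <;> simp [dist_self]
  | succ k ih =>
    intro z w
    obtain ⟨m, hm1, hm2⟩ := CAT0.midpoint z w
    have hbz : dist z m + dist m w = dist z w := by
      rw [hm1, dist_comm m w, hm2]; ring
    have c1 := ih z m
    have c2 := ih m w
    have he1 : dist z m / 2^k = dist z w / 2^(k+1) := by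
      rw [hm1, pow_succ]; ring
    have he2 : dist m w / 2^k = dist z w / 2^(k+1) := by
      rw [dist_comm m w, hm2, pow_succ]; ring
    rw [he1] at c1; rw [he2] at c2
    have c1' : DChain (fun u => dist z u + dist u w = dist z w) (dist z w / 2^(k+1)) z m := by
      refine c1.mono (fun u hu => ?_)
      refine le_antisymm ?_ (dist_triangle z u w)
      have := dist_triangle u m w
      linarith
    have c2' : DChain (fun u => dist z u + dist u w = dist z w) (dist z w / 2^(k+1)) m w := by
      refine c2.mono (fun u hu => ?_)
      refine le_antisymm ?_ (dist_triangle z u w)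
      have := dist_triangle z m u
      linarith
    exact c1'.trans c2'

lemma exists_div_pow_le {d ε : ℝ} (hd : 0 ≤ d) (hε : 0 < ε) : ∃ k : ℕ, d / 2^k ≤ ε := by
  obtain ⟨k, hk⟩ := pow_unbounded_of_one_lt (d / ε) (one_lt_two (α := ℝ))
  refine ⟨k, ?_⟩
  rw [div_le_iff₀ (by positivity)]
  rw [div_lt_iff₀ hε] at hk
  nlinarith

namespace Geodesic

variable (g : Geodesic X)

lemma proj_btw {z u : X}
    (hb : dist z u + dist u (g.map (g.proj z)) = dist z (g.map (g.proj z))) :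
    g.proj u = g.proj z := by
  refine (g.proj_unique u (g.proj_mem z) ?_).symm
  have h2 := g.proj_min z (g.proj u) (g.proj_mem u)
  have h3 := dist_triangle z u (g.map (g.proj u))
  linarith

lemma dchain_to_foot (z : X) {ε : ℝ} (hε : 0 < ε) :
    DChain (fun u => g.proj u = g.proj z) ε z (g.map (g.proj z)) := by
  obtain ⟨k, hk⟩ := exists_div_pow_le (dist_nonneg (x := z) (y := g.map (g.proj z))) hε
  exact ((dchain_btw k z _).mono (fun u hu => g.proj_btw hu)).weaken hk

lemma dchain_feet {pz pw : ℝ} (hpz : pz ∈ g.I) (hpw : pw ∈ g.I) {ε : ℝ} (hε : 0 < ε) :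
    DChain (fun u => min pz pw ≤ g.proj u ∧ g.proj u ≤ max pz pw) ε (g.map pz) (g.map pw) := by
  obtain ⟨k, hk⟩ := exists_div_pow_le (dist_nonneg (x := g.map pz) (y := g.map pw)) hε
  refine ((dchain_btw k (g.map pz) (g.map pw)).mono (fun u hu => ?_)).weaken hk
  have h1 : |g.proj u - pz| ≤ dist (g.map pz) u := by
    have := g.proj_nonexpansive u (g.map pz)
    rwa [g.proj_map_eq hpz, dist_comm] at this
  have h2 : |g.proj u - pw| ≤ dist u (g.map pw) := by
    have := g.proj_nonexpansive u (g.map pw)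
    rwa [g.proj_map_eq hpw] at this
  have h3 : dist (g.map pz) (g.map pw) = |pz - pw| := g.dist_map hpz hpw
  rw [abs_le] at h1 h2
  rcases le_total pz pw with h | h
  · rw [min_eq_left h, max_eq_right h]
    rw [h3, abs_of_nonpos (by linarith)] at hu
    constructor <;> linarith [h1.1, h1.2, h2.1, h2.2]
  · rw [min_eq_right h, max_eq_left h]
    rw [h3, abs_of_nonneg (by linarith)] at hu
    constructor <;> linarith [h1.1, h1.2, h2.1, h2.2]

end Geodesic

namespace Curtain

variable (h : Curtain X)

lemma pole_subset_I : Set.Icc (h.r - 1/2) (h.r + 1/2) ⊆ h.geo.I :=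
  fun u hu => interior_subset (h.pole_in_interior hu)

lemma mem_carrier_iff {z : X} :
    z ∈ h.carrier ↔ h.r - 1/2 ≤ h.geo.proj z ∧ h.geo.proj z ≤ h.r + 1/2 := Iff.rfl

lemma dchain_carrier {z w : X} (hz : z ∈ h.carrier) (hw : w ∈ h.carrier)
    {ε : ℝ} (hε : 0 < ε) : DChain (· ∈ h.carrier) ε z w := by
  have hzI : h.geo.proj z ∈ h.geo.I := h.pole_subset_I ⟨hz.1, hz.2⟩
  have hwI : h.geo.proj w ∈ h.geo.I := h.pole_subset_I ⟨hw.1, hw.2⟩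
  have h1 : DChain (· ∈ h.carrier) ε z (h.geo.map (h.geo.proj z)) := by
    refine (h.geo.dchain_to_foot z hε).mono (fun u hu => ?_)
    rw [mem_carrier_iff, hu]
    exact ⟨hz.1, hz.2⟩
  have h3 : DChain (· ∈ h.carrier) ε w (h.geo.map (h.geo.proj w)) := by
    refine (h.geo.dchain_to_foot w hε).mono (fun u hu => ?_)
    rw [mem_carrier_iff, hu]
    exact ⟨hw.1, hw.2⟩
  have h2 : DChain (· ∈ h.carrier) ε (h.geo.map (h.geo.proj z)) (h.geo.map (h.geo.proj w)) := by
    refine (h.geo.dchain_feet hzI hwI hε).mono (fun u hu => ?_)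
    rw [mem_carrier_iff]
    rcases le_total (h.geo.proj z) (h.geo.proj w) with hc | hc
    · rw [min_eq_left hc, max_eq_right hc] at hu
      exact ⟨le_trans hz.1 hu.1, le_trans hu.2 hw.2⟩
    · rw [min_eq_right hc, max_eq_left hc] at hu
      exact ⟨le_trans hw.1 hu.1, le_trans hu.2 hz.2⟩
  exact (h1.trans h2).trans h3.symm

/-- If a 1-Lipschitz function takes a value `< A` and a value `> A + 1` on a curtain,
it takes a value in `[A, A+1]` there (curtains are "connected"). -/
lemma carrier_crosses (F : X → ℝ) (hF : ∀ u v : X, |F u - F v| ≤ dist u v)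
    {A B : ℝ} (hAB : A + 1/2 ≤ B) {z w : X} (hz : z ∈ h.carrier) (hw : w ∈ h.carrier)
    (h1 : F z < A) (h2 : B < F w) : ∃ u ∈ h.carrier, F u ∈ Set.Icc A B := by
  have := (h.dchain_carrier hz hw (ε := 1/2) (by norm_num)).ivt F hF (by norm_num) hAB h1 h2
  obtain ⟨u, hu1, hu2⟩ := this
  exact ⟨u, hu1, hu2⟩

end Curtain

end GeoChains
section Crossing

lemma continuousOn_of_lip {f : ℝ → ℝ} {s : Set ℝ}
    (hf : ∀ u ∈ s, ∀ v ∈ s, |f u - f v| ≤ |u - v|) : ContinuousOn f s := by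
  rw [Metric.continuousOn_iff]
  intro b hb ε hε
  refine ⟨ε, hε, fun a ha hab => ?_⟩
  rw [Real.dist_eq] at hab ⊢
  exact lt_of_le_of_lt (hf a ha b hb) hab

lemma crossing_desc (f : ℝ → ℝ) (A B : ℝ) (hAB : A < B)
    (hc : ContinuousOn f (Set.Icc A B))
    (hA : 1/2 < f A) (hB : f B < -(1/2)) :
    ∃ σ τ, A < σ ∧ σ ≤ τ ∧ τ < B ∧ f σ = 1/2 ∧ f τ = -(1/2) ∧
      ∀ u ∈ Set.Icc σ τ, |f u| ≤ 1/2 := by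
  set T : Set ℝ := {u | u ∈ Set.Icc A B ∧ f u ≤ -(1/2)} with hT
  have hTsub : T ⊆ Set.Icc A B := fun u hu => hu.1
  have hTne : T.Nonempty := ⟨B, ⟨le_of_lt hAB, le_refl B⟩, le_of_lt hB⟩
  have hTbdd : BddBelow T := ⟨A, fun u hu => hu.1.1⟩
  have hTclosed : IsClosed T := by
    have : T = Set.Icc A B ∩ f ⁻¹' (Set.Iic (-(1/2))) := by
      ext u; simp [hT, Set.mem_Icc, and_comm]
    rw [this]
    exact hc.preimage_isClosed_of_isClosed isClosed_Icc isClosed_Iic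
  set τ := sInf T with hτ
  have hτT : τ ∈ T := hTclosed.csInf_mem hTne hTbdd
  have hτmem : τ ∈ Set.Icc A B := hτT.1
  have hτle : f τ ≤ -(1/2) := hτT.2
  have hbefore : ∀ u ∈ Set.Icc A B, u < τ → -(1/2) < f u := by
    intro u hu hlt
    by_contra hcon
    push_neg at hcon
    exact absurd (csInf_le hTbdd ⟨hu, hcon⟩) (not_le.mpr hlt)
  -- f τ = -(1/2) via IVT
  have hfτ : f τ = -(1/2) := by
    have hsub : Set.Icc A τ ⊆ Set.Icc A B := Set.Icc_subset_Icc le_rfl hτmem.2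
    have hivt := intermediate_value_Icc' hτmem.1 (hc.mono hsub)
    have hv : -(1/2) ∈ Set.Icc (f τ) (f A) := ⟨hτle, by linarith⟩
    obtain ⟨v, hv1, hv2⟩ := hivt hv
    have hvτ : τ ≤ v := csInf_le hTbdd ⟨hsub hv1, le_of_eq hv2⟩
    have : v = τ := le_antisymm hv1.2 hvτ
    rw [← this, hv2]
  have hAτ : A < τ := by
    rcases eq_or_lt_of_le hτmem.1 with h | h
    · exfalso; rw [← h] at hfτ; linarith
    · exact h
  set S : Set ℝ := {u | u ∈ Set.Icc A τ ∧ 1/2 ≤ f u} with hS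
  have hSne : S.Nonempty := ⟨A, ⟨le_refl A, le_of_lt hAτ⟩, le_of_lt hA⟩
  have hSbdd : BddAbove S := ⟨τ, fun u hu => hu.1.2⟩
  have hsubτ : Set.Icc A τ ⊆ Set.Icc A B := Set.Icc_subset_Icc le_rfl hτmem.2
  have hSclosed : IsClosed S := by
    have : S = Set.Icc A τ ∩ f ⁻¹' (Set.Ici (1/2)) := by
      ext u; simp [hS, Set.mem_Icc, and_comm]
    rw [this]
    exact (hc.mono hsubτ).preimage_isClosed_of_isClosed isClosed_Icc isClosed_Ici
  set σ := sSup S with hσ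
  have hσS : σ ∈ S := hSclosed.csSup_mem hSne hSbdd
  have hστ : σ ≤ τ := hσS.1.2
  have hafter : ∀ u ∈ Set.Icc A τ, σ < u → f u < 1/2 := by
    intro u hu hlt
    by_contra hcon
    push_neg at hcon
    exact absurd (le_csSup hSbdd ⟨hu, hcon⟩) (not_le.mpr hlt)
  have hfσ : f σ = 1/2 := by
    have hsub2 : Set.Icc σ τ ⊆ Set.Icc A B := Set.Icc_subset_Icc hσS.1.1 hτmem.2
    have hivt := intermediate_value_Icc' hστ (hc.mono hsub2)
    have hv : (1/2 : ℝ) ∈ Set.Icc (f τ) (f σ) := ⟨by rw [hfτ]; linarith, hσS.2⟩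
    obtain ⟨v, hv1, hv2⟩ := hivt hv
    have : v ≤ σ := le_csSup hSbdd ⟨⟨le_trans hσS.1.1 hv1.1, hv1.2⟩, hv2.ge⟩
    have hveq : v = σ := le_antisymm this hv1.1
    rw [← hveq, hv2]
  have hAσ : A < σ := by
    rcases eq_or_lt_of_le hσS.1.1 with h | h
    · exfalso; rw [← h] at hfσ; linarith
    · exact h
  have hτB : τ < B := by
    rcases eq_or_lt_of_le hτmem.2 with h | h
    · exfalso; rw [h] at hfτ; linarith
    · exact h
  refine ⟨σ, τ, hAσ, hστ, hτB, hfσ, hfτ, ?_⟩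
  intro u hu
  have huA : u ∈ Set.Icc A τ := ⟨le_trans hσS.1.1 hu.1, hu.2⟩
  have hl : -(1/2) ≤ f u := by
    rcases eq_or_lt_of_le hu.2 with h | h
    · rw [h, hfτ]
    · exact le_of_lt (hbefore u (hsubτ huA) h)
  have hr : f u ≤ 1/2 := by
    rcases eq_or_lt_of_le hu.1 with h | h
    · rw [← h, hfσ]
    · exact le_of_lt (hafter u huA h)
  rw [abs_le]; exact ⟨by linarith, hr⟩

lemma crossing_asc (f : ℝ → ℝ) (A B : ℝ) (hAB : A < B)
    (hc : ContinuousOn f (Set.Icc A B))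
    (hA : f A < -(1/2)) (hB : 1/2 < f B) :
    ∃ σ τ, A < σ ∧ σ ≤ τ ∧ τ < B ∧ f σ = -(1/2) ∧ f τ = 1/2 ∧
      ∀ u ∈ Set.Icc σ τ, |f u| ≤ 1/2 := by
  have hcont : ContinuousOn (fun s => f (A + B - s)) (Set.Icc A B) := by
    refine hc.comp (Continuous.continuousOn (by continuity)) ?_
    intro u hu
    exact ⟨by linarith [hu.2], by linarith [hu.1]⟩
  obtain ⟨σ', τ', h1, h2, h3, h4, h5, h6⟩ :=
    crossing_desc (fun s => f (A + B - s)) A B hAB hcont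
      (by simpa using hB) (by simpa using hA)
  refine ⟨A + B - τ', A + B - σ', by linarith, by linarith, by linarith, ?_, ?_, ?_⟩
  · simpa using h5
  · simpa using h4
  · intro u hu
    have := h6 (A + B - u) ⟨by linarith [hu.2], by linarith [hu.1]⟩
    simpa using this

end Crossing
section DualGeo

variable {X : Type*} [MetricSpace X] [CAT0 X]

lemma exists_dual_geodesic (γ : ℝ → X) {I : Set ℝ} (hI : I.OrdConnected)
    (hgeo : IsGeodesicOn γ I) {t₁ t₃ : ℝ} (h1 : t₁ ∈ I) (h3 : t₃ ∈ I) (h13 : t₁ ≤ t₃) :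
    ∃ g : Geodesic X, g.I = Set.Icc t₁ t₃ ∧ g.map = γ := by
  have hsub : Set.Icc t₁ t₃ ⊆ I := hI.out h1 h3
  have hcont : ∀ x : X, ContinuousOn (fun t => dist x (γ t)) (Set.Icc t₁ t₃) := by
    intro x
    apply continuousOn_of_lip
    intro u hu v hv
    have h2 : dist (γ u) (γ v) = |u - v| := hgeo u (hsub hu) v (hsub hv)
    calc |dist x (γ u) - dist x (γ v)|
        = |dist (γ u) x - dist (γ v) x| := by rw [dist_comm x (γ u), dist_comm x (γ v)]
      _ ≤ dist (γ u) (γ v) := abs_dist_sub_le _ _ _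
      _ = |u - v| := h2
  have hmin : ∀ x : X, ∃ t ∈ Set.Icc t₁ t₃, ∀ u ∈ Set.Icc t₁ t₃,
      dist x (γ t) ≤ dist x (γ u) := by
    intro x
    obtain ⟨t, ht, hmin⟩ := isCompact_Icc.exists_isMinOn (Set.nonempty_Icc.mpr h13) (hcont x)
    exact ⟨t, ht, fun u hu => hmin hu⟩
  choose P hP1 hP2 using hmin
  exact ⟨{ I := Set.Icc t₁ t₃, ordConn := Set.ordConnected_Icc, map := γ,
           isom := fun s hs t ht => hgeo s (hsub hs) t (hsub ht),
           proj := P, proj_mem := hP1, proj_min := hP2 }, rfl, rfl⟩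

end DualGeo

/-- an `L`-chain separating a point of a geodesic from two points
on either side of it has cardinality at most `1 + ⌊L/2⌋`. -/
theorem stmt12 {X : Type*} [MetricSpace X] [CAT0 X] (L : ℕ)
    (γ : ℝ → X) (I : Set ℝ) (hI : I.OrdConnected) (hgeo : IsGeodesicOn γ I)
    (t₁ t₂ t₃ : ℝ) (h1 : t₁ ∈ I) (h2 : t₂ ∈ I) (h3 : t₃ ∈ I)
    (o12 : t₁ < t₂) (o23 : t₂ < t₃)
    {n : ℕ} (c : Fin n → Curtain X) (hc : IsLChain (L : ℕ∞) c)
    (hsep : ∀ i, (c i).SeparatesSets {γ t₂} {γ t₁, γ t₃}) :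
    n ≤ 1 + L / 2 := by
  rcases le_or_gt n 1 with hn | hn
  · omega
  -- basic interval facts
  have ht13 : t₁ < t₃ := o12.trans o23
  have hIcc : Set.Icc t₁ t₃ ⊆ I := hI.out h1 h3
  have ht2m : t₂ ∈ Set.Icc t₁ t₃ := ⟨o12.le, o23.le⟩
  -- the dual geodesic
  obtain ⟨g, hgI, hgmap⟩ := exists_dual_geodesic γ hI hgeo h1 h3 ht13.le
  have hFlip : ∀ z w : X, |g.proj z - g.proj w| ≤ dist z w := g.proj_nonexpansive
  have hFγ : ∀ s ∈ Set.Icc t₁ t₃, g.proj (γ s) = s := by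
    intro s hs
    rw [← hgmap]
    exact g.proj_map_eq (by rw [hgI]; exact hs)
  -- orientation of each curtain
  have horient : ∀ i : Fin n, ∃ e : ℝ, |e| = 1 ∧
      e * ((c i).geo.proj (γ t₂) - (c i).r) < -(1/2) ∧
      1/2 < e * ((c i).geo.proj (γ t₁) - (c i).r) ∧
      1/2 < e * ((c i).geo.proj (γ t₃) - (c i).r) := by
    intro i
    rcases hsep i with ⟨hm, hp⟩ | ⟨hp, hm⟩
    · have e2 : (c i).geo.proj (γ t₂) < (c i).r - 1/2 := hm (Set.mem_singleton _)
      have e1 : (c i).r + 1/2 < (c i).geo.proj (γ t₁) := hp (Set.mem_insert _ _)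
      have e3 : (c i).r + 1/2 < (c i).geo.proj (γ t₃) :=
        hp (Set.mem_insert_of_mem _ (Set.mem_singleton _))
      exact ⟨1, by norm_num, by linarith, by linarith, by linarith⟩
    · have e2 : (c i).r + 1/2 < (c i).geo.proj (γ t₂) := hp (Set.mem_singleton _)
      have e1 : (c i).geo.proj (γ t₁) < (c i).r - 1/2 := hm (Set.mem_insert _ _)
      have e3 : (c i).geo.proj (γ t₃) < (c i).r - 1/2 :=
        hm (Set.mem_insert_of_mem _ (Set.mem_singleton _))
      exact ⟨-1, by norm_num, by nlinarith, by nlinarith, by nlinarith⟩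
  choose eps heps1 heps2 heps3 heps4 using horient
  set O : Fin n → X → ℝ := fun i z => eps i * ((c i).geo.proj z - (c i).r) with hO
  have hOcar : ∀ i (z : X), z ∈ (c i).carrier ↔ |O i z| ≤ 1/2 := by
    intro i z
    have habs : |O i z| = |(c i).geo.proj z - (c i).r| := by
      rw [hO]; simp only []; rw [abs_mul, heps1 i, one_mul]
    rw [habs, abs_le]
    constructor
    · intro h; exact ⟨by linarith [h.1], by linarith [h.2]⟩
    · intro h; exact ⟨by linarith [h.1], by linarith [h.2]⟩
  have hOlip : ∀ i (z w : X), |O i z - O i w| ≤ dist z w := by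
    intro i z w
    have h : O i z - O i w = eps i * ((c i).geo.proj z - (c i).geo.proj w) := by
      rw [hO]; ring
    rw [h, abs_mul, heps1 i, one_mul]
    exact (c i).geo.proj_nonexpansive z w
  set f : Fin n → ℝ → ℝ := fun i s => O i (γ s) with hf
  have hflip : ∀ i, ∀ u ∈ Set.Icc t₁ t₃, ∀ v ∈ Set.Icc t₁ t₃,
      |f i u - f i v| ≤ |u - v| := by
    intro i u hu v hv
    have h := hOlip i (γ u) (γ v)
    rwa [hgeo u (hIcc hu) v (hIcc hv)] at h
  have hfcont : ∀ i, ContinuousOn (f i) (Set.Icc t₁ t₃) :=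
    fun i => continuousOn_of_lip (hflip i)
  -- crossings on the left and on the right
  have hcrossL : ∀ i : Fin n, ∃ σ τ, t₁ < σ ∧ σ ≤ τ ∧ τ < t₂ ∧
      f i σ = 1/2 ∧ f i τ = -(1/2) ∧ ∀ u ∈ Set.Icc σ τ, |f i u| ≤ 1/2 := by
    intro i
    exact crossing_desc (f i) t₁ t₂ o12
      ((hfcont i).mono (Set.Icc_subset_Icc le_rfl o23.le)) (heps3 i) (heps2 i)
  have hcrossR : ∀ i : Fin n, ∃ σ τ, t₂ < σ ∧ σ ≤ τ ∧ τ < t₃ ∧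
      f i σ = -(1/2) ∧ f i τ = 1/2 ∧ ∀ u ∈ Set.Icc σ τ, |f i u| ≤ 1/2 := by
    intro i
    exact crossing_asc (f i) t₂ t₃ o23
      ((hfcont i).mono (Set.Icc_subset_Icc o12.le le_rfl)) (heps2 i) (heps4 i)
  choose σL τL hσLt hσLτ hτLt hfσL hfτL hbandL using hcrossL
  choose σR τR hσRt hσRτ hτRt hfσR hfτR hbandR using hcrossR
  -- memberships in Icc t₁ t₃
  have hσLm : ∀ i, σL i ∈ Set.Icc t₁ t₃ :=
    fun i => ⟨(hσLt i).le, by linarith [hσLτ i, hτLt i, o23]⟩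
  have hτLm : ∀ i, τL i ∈ Set.Icc t₁ t₃ :=
    fun i => ⟨by linarith [hσLt i, hσLτ i], by linarith [hτLt i, o23]⟩
  have hσRm : ∀ i, σR i ∈ Set.Icc t₁ t₃ :=
    fun i => ⟨by linarith [hσRt i, o12], by linarith [hσRτ i, hτRt i]⟩
  have hτRm : ∀ i, τR i ∈ Set.Icc t₁ t₃ :=
    fun i => ⟨by linarith [hσRt i, hσRτ i, o12], (hτRt i).le⟩
  -- widths
  have hwL : ∀ i, σL i + 1 ≤ τL i := by
    intro i
    have h := hflip i (σL i) (hσLm i) (τL i) (hτLm i)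
    have h2 : |σL i - τL i| = τL i - σL i := by
      rw [abs_of_nonpos (by linarith [hσLτ i] : σL i - τL i ≤ 0)]; ring
    rw [hfσL i, hfτL i, h2] at h
    norm_num at h
    linarith
  have hwR : ∀ i, σR i + 1 ≤ τR i := by
    intro i
    have h := hflip i (σR i) (hσRm i) (τR i) (hτRm i)
    have h2 : |σR i - τR i| = τR i - σR i := by
      rw [abs_of_nonpos (by linarith [hσRτ i] : σR i - τR i ≤ 0)]; ring
    rw [hfσR i, hfτR i, h2] at h
    norm_num at h
    linarith
  -- the crossing sets
  set C : Fin n → Set ℝ := fun i => {s | s ∈ Set.Icc t₁ t₃ ∧ |f i s| ≤ 1/2} with hC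
  have hCIcc : ∀ i, C i ⊆ Set.Icc t₁ t₃ := fun i s hs => hs.1
  have hCclosed : ∀ i, IsClosed (C i) := by
    intro i
    have h : C i = Set.Icc t₁ t₃ ∩ (f i) ⁻¹' (Set.Icc (-(1/2)) (1/2)) := by
      ext u
      simp only [hC, Set.mem_setOf_eq, Set.mem_inter_iff, Set.mem_preimage, Set.mem_Icc, abs_le]
    rw [h]
    exact (hfcont i).preimage_isClosed_of_isClosed isClosed_Icc isClosed_Icc
  have hCL : ∀ i, Set.Icc (σL i) (τL i) ⊆ C i := by
    intro i u hu
    exact ⟨⟨le_trans (hσLm i).1 hu.1, le_trans hu.2 (hτLm i).2⟩, hbandL i u hu⟩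
  have hCR : ∀ i, Set.Icc (σR i) (τR i) ⊆ C i := by
    intro i u hu
    exact ⟨⟨le_trans (hσRm i).1 hu.1, le_trans hu.2 (hτRm i).2⟩, hbandR i u hu⟩
  have hCcar : ∀ i s, s ∈ C i → γ s ∈ (c i).carrier := by
    intro i s hs
    rw [hOcar i (γ s)]
    exact hs.2
  have hCdisj : ∀ i j, i ≠ j → ∀ s, s ∈ C i → s ∉ C j := by
    intro i j hij s hsi hsj
    exact Set.disjoint_left.mp (hc.1.1 i j hij) (hCcar i s hsi) (hCcar j s hsj)
  -- extremal points of the crossing sets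
  have hCbddB : ∀ i, BddBelow (C i) := fun i => ⟨t₁, fun s hs => hs.1.1⟩
  have hCbddA : ∀ i, BddAbove (C i) := fun i => ⟨t₃, fun s hs => hs.1.2⟩
  have hCneL : ∀ i, (C i).Nonempty := fun i => ⟨σL i, hCL i ⟨le_rfl, hσLτ i⟩⟩
  set ll : Fin n → ℝ := fun i => sInf (C i) with hll
  set rr : Fin n → ℝ := fun i => sSup (C i) with hrr
  have hllC : ∀ i, ll i ∈ C i := fun i => (hCclosed i).csInf_mem (hCneL i) (hCbddB i)
  have hrrC : ∀ i, rr i ∈ C i := fun i => (hCclosed i).csSup_mem (hCneL i) (hCbddA i)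
  have hft2 : ∀ i, f i t₂ < -(1/2) := fun i => heps2 i
  have hft1 : ∀ i, 1/2 < f i t₁ := fun i => heps3 i
  have hft3 : ∀ i, 1/2 < f i t₃ := fun i => heps4 i
  -- innermost left crossing points
  set Cx : Fin n → Set ℝ := fun i => C i ∩ Set.Icc t₁ t₂ with hCx
  have hCxne : ∀ i, (Cx i).Nonempty :=
    fun i => ⟨σL i, hCL i ⟨le_rfl, hσLτ i⟩, (hσLt i).le, by linarith [hσLτ i, hτLt i]⟩
  have hCxbdd : ∀ i, BddAbove (Cx i) := fun i => ⟨t₂, fun s hs => hs.2.2⟩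
  have hCxclosed : ∀ i, IsClosed (Cx i) := fun i => (hCclosed i).inter isClosed_Icc
  set xx : Fin n → ℝ := fun i => sSup (Cx i) with hxx
  have hxxm : ∀ i, xx i ∈ Cx i := fun i => (hCxclosed i).csSup_mem (hCxne i) (hCxbdd i)
  have hxxC : ∀ i, xx i ∈ C i := fun i => (hxxm i).1
  have hxxt2 : ∀ i, xx i < t₂ := by
    intro i
    rcases eq_or_lt_of_le (hxxm i).2.2 with h | h
    · exfalso
      have hb := (hxxC i).2
      rw [h] at hb
      rw [abs_le] at hb
      linarith [hb.1, hft2 i]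
    · exact h
  -- nesting
  have hnest : ∀ i j, i ≠ j → xx i < xx j → ∀ s ∈ C j, ll i < s ∧ s < rr i := by
    intro i j hij hxlt
    have hnotin : xx j ∉ C i := hCdisj j i (Ne.symm hij) _ (hxxC j)
    have hxjIcc : xx j ∈ Set.Icc t₁ t₃ := hCIcc j (hxxC j)
    have habs : ¬ |f i (xx j)| ≤ 1/2 := fun hcon => hnotin ⟨hxjIcc, hcon⟩
    push_neg at habs
    have hneg : f i (xx j) < -(1/2) := by
      rcases lt_or_ge (f i (xx j)) 0 with hs0 | hs0
      · rw [abs_of_neg hs0] at habs; linarith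
      · exfalso
        rw [abs_of_nonneg hs0] at habs
        have hsub : Set.Icc (xx j) t₂ ⊆ Set.Icc t₁ t₃ := Set.Icc_subset_Icc hxjIcc.1 o23.le
        have hivt := intermediate_value_Icc' (le_of_lt (hxxt2 j)) ((hfcont i).mono hsub)
        have h0m : (0:ℝ) ∈ Set.Icc (f i t₂) (f i (xx j)) := ⟨by linarith [hft2 i], by linarith⟩
        obtain ⟨v, hv1, hv2⟩ := hivt h0m
        have hvC : v ∈ Cx i :=
          ⟨⟨hsub hv1, by rw [hv2]; norm_num⟩, ⟨le_trans hxjIcc.1 hv1.1, hv1.2⟩⟩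
        have h6 := le_csSup (hCxbdd i) hvC
        linarith [hv1.1]
    have hside : ∀ z ∈ (c j).carrier, O i z < -(1/2) := by
      intro z hz
      by_contra hcon
      push_neg at hcon
      have hzout : ¬ |O i z| ≤ 1/2 := by
        intro hin
        exact Set.disjoint_left.mp (hc.1.1 j i (Ne.symm hij)) hz ((hOcar i z).mpr hin)
      have hzgt : 1/2 < O i z := by
        rcases abs_cases (O i z) with ⟨he, _⟩ | ⟨he, _⟩
        · push_neg at hzout; rwa [he] at hzout
        · push_neg at hzout; rw [he] at hzout; linarith
      obtain ⟨u, hu1, hu2⟩ := (c j).carrier_crosses (O i) (hOlip i)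
        (by norm_num : -(1/2) + 1/2 ≤ (1/2:ℝ)) (hCcar j _ (hxxC j)) hz hneg hzgt
      have hui : u ∈ (c i).carrier := (hOcar i u).mpr (abs_le.mpr ⟨hu2.1, hu2.2⟩)
      exact Set.disjoint_left.mp (hc.1.1 j i (Ne.symm hij)) hu1 hui
    intro s hsC
    have hfs : f i s < -(1/2) := hside (γ s) (hCcar j s hsC)
    have hsIcc : s ∈ Set.Icc t₁ t₃ := hCIcc j hsC
    constructor
    · by_contra hcon
      push_neg at hcon
      have hsub : Set.Icc t₁ s ⊆ Set.Icc t₁ t₃ := Set.Icc_subset_Icc le_rfl hsIcc.2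
      have hivt := intermediate_value_Icc' hsIcc.1 ((hfcont i).mono hsub)
      have h0m : (0:ℝ) ∈ Set.Icc (f i s) (f i t₁) := ⟨by linarith, by linarith [hft1 i]⟩
      obtain ⟨v, hv1, hv2⟩ := hivt h0m
      have hvC : v ∈ C i := ⟨⟨hv1.1, le_trans hv1.2 hsIcc.2⟩, by rw [hv2]; norm_num⟩
      have h5 := csInf_le (hCbddB i) hvC
      have hveq : v = s := le_antisymm hv1.2 (by linarith)
      rw [hveq] at hv2
      linarith
    · by_contra hcon
      push_neg at hcon
      have hsub : Set.Icc s t₃ ⊆ Set.Icc t₁ t₃ := Set.Icc_subset_Icc hsIcc.1 le_rfl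
      have hivt := intermediate_value_Icc hsIcc.2 ((hfcont i).mono hsub)
      have h0m : (0:ℝ) ∈ Set.Icc (f i s) (f i t₃) := ⟨by linarith, by linarith [hft3 i]⟩
      obtain ⟨v, hv1, hv2⟩ := hivt h0m
      have hvC : v ∈ C i := ⟨⟨le_trans hsIcc.1 hv1.1, hv1.2⟩, by rw [hv2]; norm_num⟩
      have h5 := le_csSup (hCbddA i) hvC
      have hveq : v = s := le_antisymm (by linarith) hv1.1
      rw [hveq] at hv2
      linarith
  -- choice of the two outermost curtains
  have hxxne : ∀ i j, i ≠ j → xx i ≠ xx j := by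
    intro i j hij heq
    exact hCdisj i j hij (xx i) (hxxC i) (heq ▸ hxxC j)
  obtain ⟨a, -, ha⟩ := Finset.exists_min_image Finset.univ xx ⟨⟨0, by omega⟩, Finset.mem_univ _⟩
  have herasene : (Finset.univ.erase a).Nonempty := by
    rw [← Finset.card_pos, Finset.card_erase_of_mem (Finset.mem_univ a)]
    simp only [Finset.card_univ, Fintype.card_fin]
    omega
  obtain ⟨b, hbmem, hb⟩ := Finset.exists_min_image (Finset.univ.erase a) xx herasene
  have hba : b ≠ a := (Finset.mem_erase.mp hbmem).1
  have hstra : ∀ i, i ≠ a → xx a < xx i :=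
    fun i hi => lt_of_le_of_ne (ha i (Finset.mem_univ i)) (hxxne a i (Ne.symm hi))
  have hstrb : ∀ i, i ≠ a → i ≠ b → xx b < xx i :=
    fun i hia hib => lt_of_le_of_ne
      (hb i (Finset.mem_erase.mpr ⟨hia, Finset.mem_univ i⟩)) (hxxne b i (Ne.symm hib))
  have hspanA : ∀ i, i ≠ a → ∀ s ∈ C i, ll a < s ∧ s < rr a :=
    fun i hi => hnest a i (Ne.symm hi) (hstra i hi)
  have hspanB : ∀ i, i ≠ a → i ≠ b → ∀ s ∈ C i, ll b < s ∧ s < rr b :=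
    fun i hia hib => hnest b i (Ne.symm hib) (hstrb i hia hib)
  -- the finite set of pole centers for the dual chain
  classical
  set S : Finset ℝ := ((Finset.univ.erase a).image (fun i => σL i + 1/2)) ∪
      ((Finset.univ.erase a).image (fun i => σR i + 1/2)) with hS
  have hSmem : ∀ m ∈ S, (∃ i, i ≠ a ∧ m = σL i + 1/2) ∨ (∃ i, i ≠ a ∧ m = σR i + 1/2) := by
    intro m hm
    rw [hS, Finset.mem_union] at hm
    rcases hm with hm | hm
    · obtain ⟨i, hi, hie⟩ := Finset.mem_image.mp hm
      exact Or.inl ⟨i, (Finset.mem_erase.mp hi).1, hie.symm⟩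
    · obtain ⟨i, hi, hie⟩ := Finset.mem_image.mp hm
      exact Or.inr ⟨i, (Finset.mem_erase.mp hi).1, hie.symm⟩
  have hLL : ∀ i j, i ≠ j → σL i < σL j → τL i < σL j := by
    intro i j hij hlt
    have hjC : σL j ∈ C j := hCL j ⟨le_rfl, hσLτ j⟩
    have hnot : σL j ∉ C i := hCdisj j i (Ne.symm hij) _ hjC
    by_contra hcon
    push_neg at hcon
    exact hnot (hCL i ⟨hlt.le, hcon⟩)
  have hRR : ∀ i j, i ≠ j → σR i < σR j → τR i < σR j := by
    intro i j hij hlt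
    have hjC : σR j ∈ C j := hCR j ⟨le_rfl, hσRτ j⟩
    have hnot : σR j ∉ C i := hCdisj j i (Ne.symm hij) _ hjC
    by_contra hcon
    push_neg at hcon
    exact hnot (hCR i ⟨hlt.le, hcon⟩)
  have hLne : ∀ i j, i ≠ j → σL i ≠ σL j := by
    intro i j hij he
    refine hCdisj i j hij _ (hCL i ⟨le_rfl, hσLτ i⟩) ?_
    rw [he]; exact hCL j ⟨le_rfl, hσLτ j⟩
  have hRne : ∀ i j, i ≠ j → σR i ≠ σR j := by
    intro i j hij he
    refine hCdisj i j hij _ (hCR i ⟨le_rfl, hσRτ i⟩) ?_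
    rw [he]; exact hCR j ⟨le_rfl, hσRτ j⟩
  have hSsep : ∀ m ∈ S, ∀ m' ∈ S, m < m' → m + 1 < m' := by
    intro m hm m' hm' hlt
    rcases hSmem m hm with ⟨i, hia, he⟩ | ⟨i, hia, he⟩ <;>
      rcases hSmem m' hm' with ⟨j, hja, he'⟩ | ⟨j, hja, he'⟩ <;> subst he <;> subst he'
    · have hij : i ≠ j := by rintro rfl; exact lt_irrefl _ hlt
      have h1 : σL i < σL j := by linarith
      have h2 := hLL i j hij h1
      linarith [hwL i]
    · linarith [hwL i, hτLt i, hσRt j]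
    · exfalso
      linarith [hwL j, hτLt j, hσRt i]
    · have hij : i ≠ j := by rintro rfl; exact lt_irrefl _ hlt
      have h1 : σR i < σR j := by linarith
      have h2 := hRR i j hij h1
      linarith [hwR i]
  have hpolebnd : ∀ m ∈ S, t₁ < m - 1/2 ∧ m + 1/2 < t₃ := by
    intro m hm
    rcases hSmem m hm with ⟨i, hia, he⟩ | ⟨i, hia, he⟩ <;> subst he
    · exact ⟨by linarith [hσLt i], by linarith [hτLt i, hwL i, o23]⟩
    · exact ⟨by linarith [hσRt i, o12], by linarith [hτRt i, hwR i]⟩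
  -- witnesses that every dual curtain meets both `c a` and `c b`
  have hwit : ∀ (e : Fin n) (p q : ℝ), ll e < p → q < rr e → p + 1 ≤ q →
      ∃ z, z ∈ (c e).carrier ∧ g.proj z ∈ Set.Icc p (p + 1) := by
    intro e p q hp hq hpq
    have hz : γ (ll e) ∈ (c e).carrier := hCcar e _ (hllC e)
    have hw : γ (rr e) ∈ (c e).carrier := hCcar e _ (hrrC e)
    have hFz : g.proj (γ (ll e)) = ll e := hFγ _ (hCIcc e (hllC e))
    have hFw : g.proj (γ (rr e)) = rr e := hFγ _ (hCIcc e (hrrC e))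
    obtain ⟨u, hu1, hu2⟩ := (c e).carrier_crosses g.proj hFlip
      (by linarith : p + 1/2 ≤ p + 1) hz hw (by rw [hFz]; exact hp) (by rw [hFw]; linarith)
    exact ⟨u, hu1, hu2⟩
  have hmeet : ∀ m ∈ S,
      (∃ z, z ∈ (c a).carrier ∧ g.proj z ∈ Set.Icc (m - 1/2) (m + 1/2)) ∧
      (∃ z, z ∈ (c b).carrier ∧ g.proj z ∈ Set.Icc (m - 1/2) (m + 1/2)) := by
    intro m hm
    rcases hSmem m hm with ⟨i, hia, he⟩ | ⟨i, hia, he⟩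
    · have hσC : σL i ∈ C i := hCL i ⟨le_rfl, hσLτ i⟩
      have hτC : τL i ∈ C i := hCL i ⟨hσLτ i, le_rfl⟩
      have hIcc' : Set.Icc (σL i) (σL i + 1) = Set.Icc (m - 1/2) (m + 1/2) := by
        rw [he]; congr 1 <;> ring
      constructor
      · obtain ⟨z, hz1, hz2⟩ := hwit a (σL i) (τL i)
          (hspanA i hia _ hσC).1 (hspanA i hia _ hτC).2 (hwL i)
        exact ⟨z, hz1, by rw [← hIcc']; exact hz2⟩
      · by_cases hib : i = b
        · subst hib
          refine ⟨γ (σL i), hCcar i _ hσC, ?_⟩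
          rw [← hIcc', hFγ _ (hσLm i)]
          exact ⟨le_rfl, by linarith⟩
        · obtain ⟨z, hz1, hz2⟩ := hwit b (σL i) (τL i)
            (hspanB i hia hib _ hσC).1 (hspanB i hia hib _ hτC).2 (hwL i)
          exact ⟨z, hz1, by rw [← hIcc']; exact hz2⟩
    · have hσC : σR i ∈ C i := hCR i ⟨le_rfl, hσRτ i⟩
      have hτC : τR i ∈ C i := hCR i ⟨hσRτ i, le_rfl⟩
      have hIcc' : Set.Icc (σR i) (σR i + 1) = Set.Icc (m - 1/2) (m + 1/2) := by
        rw [he]; congr 1 <;> ring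
      constructor
      · obtain ⟨z, hz1, hz2⟩ := hwit a (σR i) (τR i)
          (hspanA i hia _ hσC).1 (hspanA i hia _ hτC).2 (hwR i)
        exact ⟨z, hz1, by rw [← hIcc']; exact hz2⟩
      · by_cases hib : i = b
        · subst hib
          refine ⟨γ (σR i), hCcar i _ hσC, ?_⟩
          rw [← hIcc', hFγ _ (hσRm i)]
          exact ⟨le_rfl, by linarith⟩
        · obtain ⟨z, hz1, hz2⟩ := hwit b (σR i) (τR i)
            (hspanB i hia hib _ hσC).1 (hspanB i hia hib _ hτC).2 (hwR i)
          exact ⟨z, hz1, by rw [← hIcc']; exact hz2⟩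
  -- cardinality of S
  have hLinj : Set.InjOn (fun i => σL i + 1/2) ↑(Finset.univ.erase a) := by
    intro i _ j _ he
    by_contra hij
    exact hLne i j hij (by linarith [he] : σL i = σL j)
  have hRinj : Set.InjOn (fun i => σR i + 1/2) ↑(Finset.univ.erase a) := by
    intro i _ j _ he
    by_contra hij
    exact hRne i j hij (by linarith [he] : σR i = σR j)
  have hdisjLR : Disjoint ((Finset.univ.erase a).image (fun i => σL i + 1/2))
      ((Finset.univ.erase a).image (fun i => σR i + 1/2)) := by
    rw [Finset.disjoint_left]
    intro m hmL hmR
    obtain ⟨i, hi, hie⟩ := Finset.mem_image.mp hmL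
    obtain ⟨j, hj, hje⟩ := Finset.mem_image.mp hmR
    have h1 : σL i + 1/2 = σR j + 1/2 := by rw [hie, hje]
    linarith [hwL i, hτLt i, hσRt j]
  have hScard : S.card = 2 * (n - 1) := by
    rw [hS, Finset.card_union_of_disjoint hdisjLR,
      Finset.card_image_of_injOn hLinj, Finset.card_image_of_injOn hRinj,
      Finset.card_erase_of_mem (Finset.mem_univ a), Finset.card_univ, Fintype.card_fin]
    omega
  -- the chain of dual curtains
  have hpole : ∀ m ∈ S, Set.Icc (m - 1/2) (m + 1/2) ⊆ interior g.I := by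
    intro m hm u hu
    rw [hgI, interior_Icc]
    exact ⟨lt_of_lt_of_le (hpolebnd m hm).1 hu.1, lt_of_le_of_lt hu.2 (hpolebnd m hm).2⟩
  set K := S.card with hK
  let eIso := S.orderIsoOfFin rfl
  let kk : Fin K → Curtain X := fun j => ⟨g, (eIso j : ℝ), hpole _ (eIso j).2⟩
  have hkkcar : ∀ (j : Fin K) (z : X), z ∈ (kk j).carrier ↔
      (eIso j : ℝ) - 1/2 ≤ g.proj z ∧ g.proj z ≤ (eIso j : ℝ) + 1/2 := fun j z => Iff.rfl
  have hmemS : ∀ j : Fin K, ((eIso j : ℝ)) ∈ S := fun j => (eIso j).2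
  have hmono : ∀ j j' : Fin K, j < j' → (eIso j : ℝ) + 1 < (eIso j' : ℝ) := by
    intro j j' hjj
    refine hSsep _ (hmemS j) _ (hmemS j') ?_
    have h1 : eIso j < eIso j' := (OrderIso.lt_iff_lt eIso).mpr hjj
    exact_mod_cast h1
  have hchain : IsChainSeq kk := by
    constructor
    · intro j j' hne
      rw [Set.disjoint_left]
      intro z hz hz'
      have h1 := (hkkcar j z).mp hz
      have h2 := (hkkcar j' z).mp hz'
      rcases lt_or_gt_of_ne hne with hlt | hlt
      · have := hmono j j' hlt; linarith [h1.2, h2.1]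
      · have := hmono j' j hlt; linarith [h1.1, h2.2]
    · intro i j k' hij hjk
      have hij' : i < j := by rw [Fin.lt_def]; omega
      have hjk' : j < k' := by rw [Fin.lt_def]; omega
      left
      constructor
      · intro z hz
        have h1 := (hkkcar i z).mp hz
        have h2 := hmono i j hij'
        show g.proj z < (eIso j : ℝ) - 1/2
        linarith [h1.2]
      · intro z hz
        have h1 := (hkkcar k' z).mp hz
        have h2 := hmono j k' hjk'
        show (eIso j : ℝ) + 1/2 < g.proj z
        linarith [h1.1]
  have hmeets : ∀ j : Fin K, Meets (kk j) (c a) ∧ Meets (kk j) (c b) := by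
    intro j
    obtain ⟨⟨za, hza1, hza2⟩, ⟨zb, hzb1, hzb2⟩⟩ := hmeet _ (hmemS j)
    exact ⟨⟨za, (hkkcar j za).mpr ⟨hza2.1, hza2.2⟩, hza1⟩,
      ⟨zb, (hkkcar j zb).mpr ⟨hzb2.1, hzb2.2⟩, hzb1⟩⟩
  have hfin := (hc.2 a b (Ne.symm hba)).2 K kk hchain hmeets
  have hfin' : K ≤ L := by exact_mod_cast hfin
  have hKval : K = 2 * (n - 1) := hScard
  omega

end Curtains
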